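/- (Face characterization, case m₃ > m₂ > m₁ ≥ 2) Assume m₃ > m₂ > m₁ ≥ 2. Then for every nonempty subset F ⊆ S, the convex hull of F is an extreme subset of the convex hull of S with F ≠ S if and only if V₂ ⊄ F and V₁ ∪ V₃ ⊄ F. -/

import Mathlib

open Finset

noncomputable def Dc {α : Type*} (V1 V2 V3 : Finset α) (v : α) : ℝ :=
  Set.indicator ↑V1 (fun _ => (V3.card : ℝ) - V2.card) v
  + Set.indicator ↑V2 (fun _ => (V1.card : ℝ) - V3.card) v
  + Set.indicator ↑V3 (fun _ => (V2.card : ℝ) - V1.card) v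

lemma Dc_mem1 {α : Type*} {V1 V2 V3 : Finset α} (hd12 : Disjoint V1 V2) (hd13 : Disjoint V1 V3)
    {v : α} (hv : v ∈ V1) : Dc V1 V2 V3 v = (V3.card : ℝ) - V2.card := by
  have h2 : v ∉ V2 := fun h => (Finset.disjoint_left.mp hd12) hv h
  have h3 : v ∉ V3 := fun h => (Finset.disjoint_left.mp hd13) hv h
  simp [Dc, Set.indicator_apply, hv, h2, h3]

lemma Dc_mem2 {α : Type*} {V1 V2 V3 : Finset α} (hd12 : Disjoint V1 V2) (hd23 : Disjoint V2 V3)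
    {v : α} (hv : v ∈ V2) : Dc V1 V2 V3 v = (V1.card : ℝ) - V3.card := by
  have h1 : v ∉ V1 := fun h => (Finset.disjoint_left.mp hd12) h hv
  have h3 : v ∉ V3 := fun h => (Finset.disjoint_left.mp hd23) hv h
  simp [Dc, Set.indicator_apply, hv, h1, h3]

lemma Dc_mem3 {α : Type*} {V1 V2 V3 : Finset α} (hd13 : Disjoint V1 V3) (hd23 : Disjoint V2 V3)
    {v : α} (hv : v ∈ V3) : Dc V1 V2 V3 v = (V2.card : ℝ) - V1.card := by
  have h1 : v ∉ V1 := fun h => (Finset.disjoint_left.mp hd13) h hv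
  have h2 : v ∉ V2 := fun h => (Finset.disjoint_left.mp hd23) h hv
  simp [Dc, Set.indicator_apply, hv, h1, h2]

section
variable {n : ℕ} {S V1 V2 V3 : Finset (Fin (2 * n) → ℝ)}

lemma sum_Dc_smul
    (hunion : V1 ∪ V2 ∪ V3 = S)
    (hd12 : Disjoint V1 V2) (hd13 : Disjoint V1 V3) (hd23 : Disjoint V2 V3)
    (hsum1 : ∑ v ∈ V1, v = fun _ => (1 : ℝ))
    (hsum2 : ∑ v ∈ V2, v = fun _ => (1 : ℝ))
    (hsum3 : ∑ v ∈ V3, v = fun _ => (1 : ℝ)) :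
    ∑ v ∈ S, Dc V1 V2 V3 v • v = 0 := by
  have hd : Disjoint (V1 ∪ V2) V3 := by
    rw [Finset.disjoint_union_left]; exact ⟨hd13, hd23⟩
  rw [← hunion, Finset.sum_union hd, Finset.sum_union hd12]
  have e1 : ∑ v ∈ V1, Dc V1 V2 V3 v • v = ((V3.card : ℝ) - V2.card) • ∑ v ∈ V1, v := by
    rw [Finset.smul_sum]
    exact Finset.sum_congr rfl fun v hv => by rw [Dc_mem1 hd12 hd13 hv]
  have e2 : ∑ v ∈ V2, Dc V1 V2 V3 v • v = ((V1.card : ℝ) - V3.card) • ∑ v ∈ V2, v := by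
    rw [Finset.smul_sum]
    exact Finset.sum_congr rfl fun v hv => by rw [Dc_mem2 hd12 hd23 hv]
  have e3 : ∑ v ∈ V3, Dc V1 V2 V3 v • v = ((V2.card : ℝ) - V1.card) • ∑ v ∈ V3, v := by
    rw [Finset.smul_sum]
    exact Finset.sum_congr rfl fun v hv => by rw [Dc_mem3 hd13 hd23 hv]
  rw [e1, e2, e3, hsum1, hsum2, hsum3, ← add_smul, ← add_smul]
  have : (V3.card : ℝ) - V2.card + ((V1.card : ℝ) - V3.card) + ((V2.card : ℝ) - V1.card) = 0 := by
    ring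
  rw [this, zero_smul]

lemma sum_Dc
    (hunion : V1 ∪ V2 ∪ V3 = S)
    (hd12 : Disjoint V1 V2) (hd13 : Disjoint V1 V3) (hd23 : Disjoint V2 V3) :
    ∑ v ∈ S, Dc V1 V2 V3 v = 0 := by
  have hd : Disjoint (V1 ∪ V2) V3 := by
    rw [Finset.disjoint_union_left]; exact ⟨hd13, hd23⟩
  rw [← hunion, Finset.sum_union hd, Finset.sum_union hd12]
  rw [Finset.sum_congr rfl fun v hv => Dc_mem1 hd12 hd13 hv,
      Finset.sum_congr rfl fun v hv => Dc_mem2 hd12 hd23 hv,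
      Finset.sum_congr rfl fun v hv => Dc_mem3 hd13 hd23 hv]
  simp only [Finset.sum_const, nsmul_eq_mul]
  ring

end
section
variable {n : ℕ} {S V1 V2 V3 : Finset (Fin (2 * n) → ℝ)}

set_option synthInstance.maxHeartbeats 1000000 in
set_option maxHeartbeats 1000000 in
lemma key_dep
    (hScard : S.card = n + 2)
    (hunion : V1 ∪ V2 ∪ V3 = S)
    (hd12 : Disjoint V1 V2) (hd13 : Disjoint V1 V3) (hd23 : Disjoint V2 V3)
    (hne1 : V1.Nonempty)
    (hsum1 : ∑ v ∈ V1, v = fun _ => (1 : ℝ))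
    (hsum2 : ∑ v ∈ V2, v = fun _ => (1 : ℝ))
    (hsum3 : ∑ v ∈ V3, v = fun _ => (1 : ℝ))
    (hspan : Module.finrank ℝ (Submodule.span ℝ (S : Set (Fin (2 * n) → ℝ))) = n)
    (h12 : V1.card < V2.card) (h23 : V2.card < V3.card)
    (c : (Fin (2 * n) → ℝ) → ℝ)
    (hc0 : ∑ v ∈ S, c v • v = 0) (hc1 : ∑ v ∈ S, c v = 0) :
    ∃ t : ℝ, ∀ v ∈ S, c v = t * Dc V1 V2 V3 v := by
  classical
  have hsub1 : V1 ⊆ S := by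
    rw [← hunion]; exact Finset.subset_union_left.trans Finset.subset_union_left
  have hsub2 : V2 ⊆ S := by
    rw [← hunion]; exact Finset.subset_union_right.trans Finset.subset_union_left
  let E := (Fin (2 * n) → ℝ)
  let g : ↥S → E × ℝ := fun s => ((s : E), 1)
  let φ : (↥S → ℝ) →ₗ[ℝ] E × ℝ := Fintype.linearCombination ℝ g
  have hφ : ∀ cc : E → ℝ, φ (fun s => cc ↑s) = (∑ v ∈ S, cc v • v, ∑ v ∈ S, cc v) := by
    intro cc
    have h1 : φ (fun s => cc ↑s) = ∑ i : ↥S, ((cc ↑i • (i : E), cc ↑i) : E × ℝ) := by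
      rw [Fintype.linearCombination_apply]
      exact Finset.sum_congr rfl fun i _ => by
        show cc ↑i • ((i : E), (1:ℝ)) = _
        rw [Prod.smul_mk, smul_eq_mul, mul_one]
    rw [h1, Prod.ext_iff]
    constructor
    · rw [Prod.fst_sum]
      exact Finset.sum_coe_sort S (fun v => cc v • v)
    · rw [Prod.snd_sum]
      exact Finset.sum_coe_sort S (fun v => cc v)
  set T := Submodule.span ℝ (Set.range g) with hTdef
  have hrange : LinearMap.range φ = T := Fintype.range_linearCombination ℝ g
  let f : T →ₗ[ℝ] E := (LinearMap.fst ℝ E ℝ).comp T.subtype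
  have hrangef : LinearMap.range f = Submodule.span ℝ (S : Set E) := by
    rw [LinearMap.range_comp, Submodule.range_subtype, hTdef, Submodule.map_span]
    congr 1
    ext x
    constructor
    · rintro ⟨y, ⟨s, rfl⟩, rfl⟩; exact s.2
    · intro hx; exact ⟨g ⟨x, hx⟩, ⟨⟨x, hx⟩, rfl⟩, rfl⟩
  have hmemT : ∀ v ∈ S, (((v : E), (1:ℝ)) : E × ℝ) ∈ T := fun v hv =>
    Submodule.subset_span ⟨⟨v, hv⟩, rfl⟩
  have hsumT : ∀ (W : Finset E), W ⊆ S → ((∑ v ∈ W, v, (W.card : ℝ)) : E × ℝ) ∈ T := by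
    intro W hW
    have h := Submodule.sum_mem T (fun v hv => hmemT v (hW hv))
    have he : ∑ v ∈ W, (((v : E), (1:ℝ)) : E × ℝ) = ((∑ v ∈ W, v, (W.card : ℝ)) : E × ℝ) := by
      rw [Prod.ext_iff]
      constructor
      · rw [Prod.fst_sum]
      · rw [Prod.snd_sum]; simp
    rw [← he]; exact h
  have hzT : (((0 : E), (V2.card : ℝ) - V1.card) : E × ℝ) ∈ T := by
    have h2 := hsumT V2 hsub2
    have h1 := hsumT V1 hsub1
    have := Submodule.sub_mem T h2 h1
    rw [Prod.mk_sub_mk, hsum1, hsum2, sub_self] at this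
    exact this
  haveI : FiniteDimensional ℝ (E × ℝ) := by infer_instance
  have hkerf_le : Module.finrank ℝ (LinearMap.ker f) ≤ 1 := by
    let h : LinearMap.ker f →ₗ[ℝ] ℝ :=
      (LinearMap.snd ℝ E ℝ).comp (T.subtype.comp (LinearMap.ker f).subtype)
    have hker0 : LinearMap.ker h = ⊥ := by
      apply LinearMap.ker_eq_bot'.mpr
      intro x hx
      have h1 : (((x : T) : E × ℝ)).1 = 0 := LinearMap.mem_ker.mp x.2
      have h2 : (((x : T) : E × ℝ)).2 = 0 := hx
      have : ((x : T) : E × ℝ) = 0 := Prod.ext h1 h2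
      exact Subtype.ext (Subtype.ext this)
    have hinj : Function.Injective h := fun a b hab => by
      have ha : (((a : T) : E × ℝ)).1 = 0 := LinearMap.mem_ker.mp a.2
      have hb : (((b : T) : E × ℝ)).1 = 0 := LinearMap.mem_ker.mp b.2
      have hab' : (((a : T) : E × ℝ)).2 = (((b : T) : E × ℝ)).2 := hab
      exact Subtype.ext (Subtype.ext (Prod.ext (ha.trans hb.symm) hab'))
    calc Module.finrank ℝ (LinearMap.ker f) ≤ Module.finrank ℝ ℝ :=
          LinearMap.finrank_le_finrank_of_injective hinj
      _ = 1 := Module.finrank_self ℝ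
  have hkerf_pos : 0 < Module.finrank ℝ (LinearMap.ker f) := by
    have hzker : (⟨⟨_, hzT⟩, rfl⟩ : LinearMap.ker f) ≠ 0 := by
      intro h
      have h2 := congrArg (fun x : LinearMap.ker f => (((x : T) : E × ℝ)).2) h
      simp only at h2
      have hlt : (V1.card : ℝ) < V2.card := Nat.cast_lt.mpr h12
      rw [show (((0 : LinearMap.ker f) : T) : E × ℝ) = 0 from rfl] at h2
      simp at h2
      linarith
    exact (Module.finrank_pos_iff (R := ℝ)).mpr (nontrivial_of_ne _ _ hzker)
  have hkerf : Module.finrank ℝ (LinearMap.ker f) = 1 := le_antisymm hkerf_le hkerf_pos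
  have hT : Module.finrank ℝ T = n + 1 := by
    have h := LinearMap.finrank_range_add_finrank_ker f
    rw [hrangef, hkerf, hspan] at h
    have hTfin : Module.finrank ℝ T = Module.finrank ℝ (⊤ : Submodule ℝ T) := by
      rw [finrank_top]
    omega
  have hdom : Module.finrank ℝ (↥S → ℝ) = n + 2 := by
    rw [Module.finrank_pi]
    simp [Fintype.card_coe, hScard]
  have hkerφ : Module.finrank ℝ (LinearMap.ker φ) = 1 := by
    have h := LinearMap.finrank_range_add_finrank_ker φ
    rw [hrange, hT, hdom] at h
    omega
  let D' : ↥S → ℝ := fun s => Dc V1 V2 V3 ↑s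
  have hD'mem : D' ∈ LinearMap.ker φ := by
    rw [LinearMap.mem_ker]
    have := hφ (Dc V1 V2 V3)
    rw [show D' = (fun s : ↥S => Dc V1 V2 V3 ↑s) from rfl, this,
      sum_Dc_smul hunion hd12 hd13 hd23 hsum1 hsum2 hsum3, sum_Dc hunion hd12 hd13 hd23]
    rfl
  have hD'ne : D' ≠ 0 := by
    obtain ⟨v1, hv1⟩ := hne1
    intro h
    have h2 := congrFun h ⟨v1, hsub1 hv1⟩
    have h3 : Dc V1 V2 V3 v1 = 0 := h2
    rw [Dc_mem1 hd12 hd13 hv1] at h3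
    have hlt : (V2.card : ℝ) < V3.card := Nat.cast_lt.mpr h23
    linarith
  have hspanD : Submodule.span ℝ {D'} = LinearMap.ker φ := by
    apply Submodule.eq_of_le_of_finrank_eq
    · rw [Submodule.span_singleton_le_iff_mem]; exact hD'mem
    · rw [finrank_span_singleton hD'ne, hkerφ]
  have hcmem : (fun s : ↥S => c ↑s) ∈ LinearMap.ker φ := by
    rw [LinearMap.mem_ker, hφ c, hc0, hc1]
    rfl
  rw [← hspanD, Submodule.mem_span_singleton] at hcmem
  obtain ⟨t, ht⟩ := hcmem
  refine ⟨t, fun v hv => ?_⟩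
  have h2 := congrFun ht ⟨v, hv⟩
  simpa [D', smul_eq_mul] using h2.symm

end
lemma split_seg {E : Type*} [AddCommGroup E] [Module ℝ E] [DecidableEq E] (G : Finset E) (w : E → ℝ)
    (hw : ∀ v ∈ G, 0 < w v) (hsum : ∑ v ∈ G, w v = 1) (hG : 1 < G.card)
    (s0 : E) (hs0 : s0 ∈ G) :
    ∃ y ∈ convexHull ℝ (↑(G.erase s0) : Set E),
      (∑ v ∈ G, w v • v) ∈ openSegment ℝ s0 y := by
  classical
  obtain ⟨b, hbG, hbne⟩ := Finset.exists_mem_ne hG s0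
  have hbe : b ∈ G.erase s0 := Finset.mem_erase.mpr ⟨hbne, hbG⟩
  set r := ∑ v ∈ G.erase s0, w v with hrdef
  have hr : 0 < r :=
    Finset.sum_pos (fun v hv => hw v (Finset.mem_of_mem_erase hv)) ⟨b, hbe⟩
  have hadd : w s0 + r = 1 := by
    rw [hrdef, Finset.add_sum_erase G w hs0, hsum]
  refine ⟨∑ v ∈ G.erase s0, (w v / r) • v, ?_, ?_⟩
  · apply Finset.mem_convexHull'.mpr
    refine ⟨fun v => w v / r, fun v hv => le_of_lt (div_pos (hw v (Finset.mem_of_mem_erase hv)) hr),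
      ?_, rfl⟩
    rw [← Finset.sum_div, ← hrdef, div_self hr.ne']
  · refine ⟨w s0, r, hw s0 hs0, hr, hadd, ?_⟩
    rw [Finset.smul_sum]
    have : ∀ v ∈ G.erase s0, r • (w v / r) • v = w v • v := by
      intro v hv
      rw [smul_smul, mul_div_cancel₀ _ hr.ne']
    rw [Finset.sum_congr rfl this, Finset.add_sum_erase G (fun v => w v • v) hs0]
section
variable {n : ℕ} {S V1 V2 V3 : Finset (Fin (2 * n) → ℝ)}

set_option maxHeartbeats 1000000 in
lemma vertex_mem
    (hScard : S.card = n + 2)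
    (hunion : V1 ∪ V2 ∪ V3 = S)
    (hd12 : Disjoint V1 V2) (hd13 : Disjoint V1 V3) (hd23 : Disjoint V2 V3)
    (hne1 : V1.Nonempty)
    (hsum1 : ∑ v ∈ V1, v = fun _ => (1 : ℝ))
    (hsum2 : ∑ v ∈ V2, v = fun _ => (1 : ℝ))
    (hsum3 : ∑ v ∈ V3, v = fun _ => (1 : ℝ))
    (hspan : Module.finrank ℝ (Submodule.span ℝ (S : Set (Fin (2 * n) → ℝ))) = n)
    (hm1 : 2 ≤ V1.card) (h12 : V1.card < V2.card) (h23 : V2.card < V3.card)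
    {F : Finset (Fin (2 * n) → ℝ)} (hFS : F ⊆ S)
    {s : Fin (2 * n) → ℝ} (hsS : s ∈ S)
    (hs : s ∈ convexHull ℝ (F : Set (Fin (2 * n) → ℝ))) : s ∈ F := by
  classical
  by_contra hsF
  obtain ⟨w, hw0, hw1, hwx⟩ := Finset.mem_convexHull'.mp hs
  set cc : (Fin (2 * n) → ℝ) → ℝ :=
    fun v => (if v ∈ F then w v else 0) - (if v = s then 1 else 0) with hccdef
  have hc0 : ∑ v ∈ S, cc v • v = 0 := by
    simp only [hccdef, sub_smul, Finset.sum_sub_distrib, ite_smul, zero_smul, one_smul]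
    rw [Finset.sum_ite_mem, Finset.inter_eq_right.mpr hFS, hwx,
      Finset.sum_ite_eq' S s (fun v => v), if_pos hsS, sub_self]
  have hc1 : ∑ v ∈ S, cc v = 0 := by
    simp only [hccdef, Finset.sum_sub_distrib]
    rw [Finset.sum_ite_mem, Finset.inter_eq_right.mpr hFS, hw1,
      Finset.sum_ite_eq' S s (fun _ => (1:ℝ)), if_pos hsS, sub_self]
  obtain ⟨t, ht⟩ := key_dep hScard hunion hd12 hd13 hd23 hne1 hsum1 hsum2 hsum3 hspan
    h12 h23 cc hc0 hc1
  have hccnn : ∀ v, v ≠ s → 0 ≤ cc v := by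
    intro v hv
    simp only [hccdef, if_neg hv, sub_zero]
    split_ifs with h
    · exact hw0 v h
    · exact le_refl 0
  have hccs : cc s = -1 := by
    simp [hccdef, hsF]
  have main : ∀ W : Finset (Fin (2 * n) → ℝ), 1 < W.card → W ⊆ S → s ∈ W →
      (∀ v ∈ W, Dc V1 V2 V3 v = Dc V1 V2 V3 s) → False := by
    intro W hWcard hWS hsW hDW
    obtain ⟨w', hw'W, hw'ne⟩ := Finset.exists_mem_ne hWcard s
    have h1 : cc w' = t * Dc V1 V2 V3 s := by rw [ht w' (hWS hw'W), hDW w' hw'W]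
    have h2 : cc s = t * Dc V1 V2 V3 s := ht s hsS
    have h4 : 0 ≤ cc w' := hccnn w' hw'ne
    linarith
  have hsmem : s ∈ V1 ∪ V2 ∪ V3 := hunion ▸ hsS
  have hsub1 : V1 ⊆ S := by
    rw [← hunion]; exact Finset.subset_union_left.trans Finset.subset_union_left
  have hsub2 : V2 ⊆ S := by
    rw [← hunion]; exact Finset.subset_union_right.trans Finset.subset_union_left
  have hsub3 : V3 ⊆ S := by
    rw [← hunion]; exact Finset.subset_union_right
  rcases Finset.mem_union.mp hsmem with h | h3
  · rcases Finset.mem_union.mp h with h1 | h2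
    · exact main V1 (by omega) hsub1 h1
        (fun v hv => by rw [Dc_mem1 hd12 hd13 hv, Dc_mem1 hd12 hd13 h1])
    · exact main V2 (by omega) hsub2 h2
        (fun v hv => by rw [Dc_mem2 hd12 hd23 hv, Dc_mem2 hd12 hd23 h2])
  · exact main V3 (by omega) hsub3 h3
      (fun v hv => by rw [Dc_mem3 hd13 hd23 hv, Dc_mem3 hd13 hd23 h3])

end
set_option maxHeartbeats 2000000 in
theorem stmt_6
    (n : ℕ) (hn : 0 < n)
    (S V1 V2 V3 : Finset (Fin (2 * n) → ℝ))
    (h01 : ∀ v ∈ S, ∀ i, v i = 0 ∨ v i = 1)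
    (hScard : S.card = n + 2)
    (hunion : V1 ∪ V2 ∪ V3 = S)
    (hd12 : Disjoint V1 V2) (hd13 : Disjoint V1 V3) (hd23 : Disjoint V2 V3)
    (hne1 : V1.Nonempty) (hne2 : V2.Nonempty) (hne3 : V3.Nonempty)
    (hsum1 : ∑ v ∈ V1, v = fun _ => (1 : ℝ))
    (hsum2 : ∑ v ∈ V2, v = fun _ => (1 : ℝ))
    (hsum3 : ∑ v ∈ V3, v = fun _ => (1 : ℝ))
    (hspan : Module.finrank ℝ (Submodule.span ℝ (S : Set (Fin (2 * n) → ℝ))) = n)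
    (hm1 : 2 ≤ V1.card) (h12 : V1.card < V2.card) (h23 : V2.card < V3.card)
    : ∀ F ⊆ S, F.Nonempty →
      ((IsExtreme ℝ (convexHull ℝ (S : Set (Fin (2 * n) → ℝ)))
          (convexHull ℝ (F : Set (Fin (2 * n) → ℝ))) ∧ F ≠ S) ↔
        (¬ V2 ⊆ F ∧ ¬ V1 ∪ V3 ⊆ F)) := by
  classical
  intro F hFS hFne
  set A := (V1.card : ℝ) with hAdef
  set B := (V2.card : ℝ) with hBdef
  set C := (V3.card : ℝ) with hCdef
  have hA2 : (2 : ℝ) ≤ A := by rw [hAdef]; exact_mod_cast hm1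
  have hAB : A < B := by rw [hAdef, hBdef]; exact_mod_cast h12
  have hBC : B < C := by rw [hBdef, hCdef]; exact_mod_cast h23
  have hBpos : 0 < B := by linarith
  set K := B * (C - A) with hKdef
  have hKpos : 0 < K := by
    apply mul_pos hBpos; linarith
  have hsub1 : V1 ⊆ S := by
    rw [← hunion]; exact Finset.subset_union_left.trans Finset.subset_union_left
  have hsub2 : V2 ⊆ S := by
    rw [← hunion]; exact Finset.subset_union_right.trans Finset.subset_union_left
  have hsub3 : V3 ⊆ S := by
    rw [← hunion]; exact Finset.subset_union_right
  set P := V1 ∪ V3 with hPdef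
  have hPS : P ⊆ S := Finset.union_subset hsub1 hsub3
  set x : Fin (2 * n) → ℝ := fun _ => B⁻¹ with hxdef
  -- x as a convex combination of V2
  have hxV2 : ∑ v ∈ V2, B⁻¹ • v = x := by
    rw [← Finset.smul_sum, hsum2]
    funext i
    simp [hxdef]
  have hwNsum : ∑ v ∈ V2, (B⁻¹ : ℝ) = 1 := by
    rw [Finset.sum_const, nsmul_eq_mul, ← hBdef]
    field_simp
  have hxmemV2 : x ∈ convexHull ℝ (V2 : Set (Fin (2 * n) → ℝ)) :=
    Finset.mem_convexHull'.mpr ⟨fun _ => B⁻¹,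
      fun y _ => le_of_lt (inv_pos.mpr hBpos), hwNsum, hxV2⟩
  -- x as a convex combination of P
  set wP : (Fin (2 * n) → ℝ) → ℝ := fun v => Dc V1 V2 V3 v / K with hwPdef
  have hwPpos : ∀ v ∈ P, 0 < wP v := by
    intro v hv
    have hD : 0 < Dc V1 V2 V3 v := by
      rcases Finset.mem_union.mp hv with h | h
      · rw [Dc_mem1 hd12 hd13 h, ← hBdef, ← hCdef]; linarith
      · rw [Dc_mem3 hd13 hd23 h, ← hAdef, ← hBdef]; linarith
    exact div_pos hD hKpos
  have hwPsum : ∑ v ∈ P, wP v = 1 := by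
    rw [hwPdef, ← Finset.sum_div, hPdef, Finset.sum_union hd13,
      Finset.sum_congr rfl (fun v hv => Dc_mem1 hd12 hd13 hv),
      Finset.sum_congr rfl (fun v hv => Dc_mem3 hd13 hd23 hv)]
    simp only [Finset.sum_const, nsmul_eq_mul, ← hAdef, ← hBdef, ← hCdef]
    rw [hKdef]
    field_simp
    ring
    have hCA : -A + C ≠ 0 := by intro h; linarith
    field_simp
  have hxP : ∑ v ∈ P, wP v • v = x := by
    have h1 : ∀ v ∈ P, wP v • v = K⁻¹ • (Dc V1 V2 V3 v • v) := by
      intro v _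
      show (Dc V1 V2 V3 v / K) • v = _
      rw [smul_smul, div_eq_inv_mul]
    rw [Finset.sum_congr rfl h1, ← Finset.smul_sum, hPdef, Finset.sum_union hd13]
    have e1 : ∑ v ∈ V1, Dc V1 V2 V3 v • v = (C - B) • ∑ v ∈ V1, v := by
      rw [Finset.smul_sum]
      exact Finset.sum_congr rfl fun v hv => by rw [Dc_mem1 hd12 hd13 hv]
    have e3 : ∑ v ∈ V3, Dc V1 V2 V3 v • v = (B - A) • ∑ v ∈ V3, v := by
      rw [Finset.smul_sum]
      exact Finset.sum_congr rfl fun v hv => by rw [Dc_mem3 hd13 hd23 hv]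
    rw [e1, e3, hsum1, hsum3]
    funext i
    simp only [Pi.smul_apply, Pi.add_apply, smul_eq_mul, hxdef]
    rw [hKdef]
    field_simp
    ring
    have hCA : C - A ≠ 0 := by intro h; linarith
    field_simp
  have hxmemP : x ∈ convexHull ℝ (P : Set (Fin (2 * n) → ℝ)) :=
    Finset.mem_convexHull'.mpr ⟨wP, fun y hy => le_of_lt (hwPpos y hy), hwPsum, hxP⟩
  have hPcard : 1 < P.card := lt_of_lt_of_le (by omega : 1 < V1.card)
    (Finset.card_le_card Finset.subset_union_left)
  have hV2card : 1 < V2.card := by omega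
  constructor
  · rintro ⟨hext, hFS'⟩
    constructor
    · -- if V2 ⊆ F then F = S
      intro hV2F
      have hxF : x ∈ convexHull ℝ (F : Set (Fin (2 * n) → ℝ)) :=
        convexHull_mono (Finset.coe_subset.mpr hV2F) hxmemV2
      have hPF : ∀ s0 ∈ P, s0 ∈ F := by
        intro s0 hs0
        obtain ⟨y, hy, hseg⟩ := split_seg P wP hwPpos hwPsum hPcard s0 hs0
        rw [hxP] at hseg
        have hs0S : s0 ∈ convexHull ℝ (S : Set (Fin (2 * n) → ℝ)) :=
          subset_convexHull ℝ _ (Finset.mem_coe.mpr (hPS hs0))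
        have hyS : y ∈ convexHull ℝ (S : Set (Fin (2 * n) → ℝ)) :=
          convexHull_mono (Finset.coe_subset.mpr ((Finset.erase_subset s0 P).trans hPS)) hy
        have hmem := hext.2 hs0S hyS hxF hseg
        exact vertex_mem hScard hunion hd12 hd13 hd23 hne1 hsum1 hsum2 hsum3 hspan
          hm1 h12 h23 hFS (hPS hs0) hmem
      apply hFS'
      apply Finset.Subset.antisymm hFS
      rw [← hunion]
      exact Finset.union_subset
        (Finset.union_subset (fun v hv => hPF v (Finset.mem_union_left _ hv)) hV2F)
        (fun v hv => hPF v (Finset.mem_union_right _ hv))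
    · -- if P ⊆ F then F = S
      intro hPF
      have hxF : x ∈ convexHull ℝ (F : Set (Fin (2 * n) → ℝ)) :=
        convexHull_mono (Finset.coe_subset.mpr hPF) hxmemP
      have hNF : ∀ s0 ∈ V2, s0 ∈ F := by
        intro s0 hs0
        obtain ⟨y, hy, hseg⟩ := split_seg V2 (fun _ => B⁻¹)
          (fun v _ => inv_pos.mpr hBpos) hwNsum hV2card s0 hs0
        rw [hxV2] at hseg
        have hs0S : s0 ∈ convexHull ℝ (S : Set (Fin (2 * n) → ℝ)) :=
          subset_convexHull ℝ _ (Finset.mem_coe.mpr (hsub2 hs0))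
        have hyS : y ∈ convexHull ℝ (S : Set (Fin (2 * n) → ℝ)) :=
          convexHull_mono (Finset.coe_subset.mpr ((Finset.erase_subset s0 V2).trans hsub2)) hy
        have hmem := hext.2 hs0S hyS hxF hseg
        exact vertex_mem hScard hunion hd12 hd13 hd23 hne1 hsum1 hsum2 hsum3 hspan
          hm1 h12 h23 hFS (hsub2 hs0) hmem
      apply hFS'
      apply Finset.Subset.antisymm hFS
      rw [← hunion]
      exact Finset.union_subset
        (Finset.union_subset (fun v hv => hPF (Finset.mem_union_left _ hv)) hNF)
        (fun v hv => hPF (Finset.mem_union_right _ hv))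
  · rintro ⟨hN, hP⟩
    have hFneS : F ≠ S := by
      intro h; exact hN (by rw [h]; exact hsub2)
    refine ⟨⟨convexHull_mono (Finset.coe_subset.mpr hFS), ?_⟩, hFneS⟩
    intro a ha b hb x' hx' hseg
    obtain ⟨α, hα0, hα1, hαa⟩ := Finset.mem_convexHull'.mp ha
    obtain ⟨β, hβ0, hβ1, hβb⟩ := Finset.mem_convexHull'.mp hb
    obtain ⟨f, hf0, hf1, hfx⟩ := Finset.mem_convexHull'.mp hx'
    obtain ⟨θ, η, hθ, hη, hθη, habx⟩ := hseg
    set cc : (Fin (2 * n) → ℝ) → ℝ :=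
      fun v => θ * α v + η * β v - (if v ∈ F then f v else 0) with hccdef
    have hc0 : ∑ v ∈ S, cc v • v = 0 := by
      simp only [hccdef, sub_smul, add_smul, Finset.sum_sub_distrib, Finset.sum_add_distrib,
        mul_smul, ite_smul, zero_smul]
      rw [← Finset.smul_sum, ← Finset.smul_sum, hαa, hβb,
        Finset.sum_ite_mem, Finset.inter_eq_right.mpr hFS, hfx, habx, sub_self]
    have hc1 : ∑ v ∈ S, cc v = 0 := by
      simp only [hccdef, Finset.sum_sub_distrib, Finset.sum_add_distrib, ← Finset.mul_sum]
      rw [hα1, hβ1, Finset.sum_ite_mem, Finset.inter_eq_right.mpr hFS, hf1]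
      rw [mul_one, mul_one, hθη, sub_self]
    obtain ⟨t, ht⟩ := key_dep hScard hunion hd12 hd13 hd23 hne1 hsum1 hsum2 hsum3 hspan
      h12 h23 cc hc0 hc1
    obtain ⟨wN, hwN2, hwNF⟩ := Finset.not_subset.mp hN
    obtain ⟨wp, hwpP, hwpF⟩ := Finset.not_subset.mp hP
    have hccval : ∀ v ∈ S, v ∉ F → cc v = θ * α v + η * β v := by
      intro v _ hvF
      rw [hccdef]
      simp [if_neg hvF]
    have hccnn : ∀ v ∈ S, v ∉ F → 0 ≤ cc v := by
      intro v hvS hvF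
      rw [hccval v hvS hvF]
      exact add_nonneg (mul_nonneg hθ.le (hα0 v hvS)) (mul_nonneg hη.le (hβ0 v hvS))
    have ht0 : t = 0 := by
      have hN1 : 0 ≤ t * (A - C) := by
        have := hccnn wN (hsub2 hwN2) hwNF
        rw [ht wN (hsub2 hwN2), Dc_mem2 hd12 hd23 hwN2, ← hAdef, ← hCdef] at this
        exact this
      have htle : t ≤ 0 := by nlinarith
      have hDwp : 0 < Dc V1 V2 V3 wp := by
        rcases Finset.mem_union.mp hwpP with h | h
        · rw [Dc_mem1 hd12 hd13 h, ← hBdef, ← hCdef]; linarith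
        · rw [Dc_mem3 hd13 hd23 h, ← hAdef, ← hBdef]; linarith
      have hN2 : 0 ≤ t * Dc V1 V2 V3 wp := by
        have := hccnn wp (hPS hwpP) hwpF
        rw [ht wp (hPS hwpP)] at this
        exact this
      nlinarith
    have hzero : ∀ v ∈ S, v ∉ F → α v = 0 ∧ β v = 0 := by
      intro v hvS hvF
      have h1 : cc v = 0 := by rw [ht v hvS, ht0, zero_mul]
      rw [hccval v hvS hvF] at h1
      have hθα : 0 ≤ θ * α v := mul_nonneg hθ.le (hα0 v hvS)
      have hηβ : 0 ≤ η * β v := mul_nonneg hη.le (hβ0 v hvS)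
      have h2 : θ * α v = 0 := by linarith
      have h3 : η * β v = 0 := by linarith
      exact ⟨(mul_eq_zero.mp h2).resolve_left hθ.ne',
        (mul_eq_zero.mp h3).resolve_left hη.ne'⟩
    suffices a ∈ convexHull ℝ (F : Set (Fin (2 * n) → ℝ)) ∧ b ∈ convexHull ℝ (F : Set (Fin (2 * n) → ℝ)) from this.1
    constructor
    · apply Finset.mem_convexHull'.mpr
      refine ⟨α, fun y hy => hα0 y (hFS hy), ?_, ?_⟩
      · rw [← hα1]
        exact Finset.sum_subset hFS (fun v hvS hvF => (hzero v hvS hvF).1)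
      · rw [← hαa]
        exact Finset.sum_subset hFS (f := fun v => α v • v)
          (fun v hvS hvF => by simp [(hzero v hvS hvF).1])
    · apply Finset.mem_convexHull'.mpr
      refine ⟨β, fun y hy => hβ0 y (hFS hy), ?_, ?_⟩
      · rw [← hβ1]
        exact Finset.sum_subset hFS (fun v hvS hvF => (hzero v hvS hvF).2)
      · rw [← hβb]
        exact Finset.sum_subset hFS (f := fun v => β v • v)
          (fun v hvS hvF => by simp [(hzero v hvS hvF).2])
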